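/- Let R* = Σ_{i=0}^∞ (1/(μ*_i b*_i)) Σ_{j=0}^i μ*_j (a value in [0,∞]). Then R* = Σ_{j=0}^∞ (H_j²/(μ_j b_j)) Σ_{i=j}^∞ μ_{i+1}/(H_i H_{i+1}) and R* ≤ μ² · S, where S = Σ_{k=0}^∞ (1/(μ_k b_k)) Σ_{i=k+1}^∞ μ_i. In particular, if S < ∞ then R* < ∞ (the dual chain has exit boundary at infinity). -/

import Mathlib

noncomputable def bdMu (a b : ℕ → ℝ) (i : ℕ) : ℝ :=
  (∏ k ∈ Finset.range i, b k) / (∏ k ∈ Finset.range i, a (k + 1))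

noncomputable def bdPi (a b : ℕ → ℝ) (i : ℕ) : ℝ :=
  bdMu a b i / ∑' j : ℕ, bdMu a b j

noncomputable def bdH (a b : ℕ → ℝ) (i : ℕ) : ℝ :=
  ∑ j ∈ Finset.range (i + 1), bdPi a b j

noncomputable def bdAStar (a b : ℕ → ℝ) (i : ℕ) : ℝ :=
  (bdH a b (i - 1) / bdH a b i) * b i

noncomputable def bdBStar (a b : ℕ → ℝ) (i : ℕ) : ℝ :=
  (bdH a b (i + 1) / bdH a b i) * a (i + 1)

noncomputable def bdMuStar (a b : ℕ → ℝ) (i : ℕ) : ℝ :=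
  bdMu (bdAStar a b) (bdBStar a b) i

lemma bdMu_zero (a b : ℕ → ℝ) : bdMu a b 0 = 1 := by simp [bdMu]

lemma bdMu_pos (a b : ℕ → ℝ) (ha : ∀ i, 1 ≤ i → 0 < a i) (hb : ∀ i, 0 < b i) (i : ℕ) :
    0 < bdMu a b i :=
  div_pos (Finset.prod_pos fun k _ => hb k)
    (Finset.prod_pos fun k _ => ha _ (Nat.le_add_left 1 k))

lemma bdMu_succ (a b : ℕ → ℝ) (i : ℕ) :
    bdMu a b (i + 1) = bdMu a b i * b i / a (i + 1) := by
  simp only [bdMu, Finset.prod_range_succ]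
  ring

/-- swap of a triangular double sum in `ℝ≥0∞`. -/
lemma tsum_range_swap (G : ℕ → ℕ → ENNReal) :
    ∑' i : ℕ, ∑ j ∈ Finset.range (i + 1), G i j = ∑' j : ℕ, ∑' k : ℕ, G (j + k) j := by
  have h1 : ∀ i : ℕ, ∑ j ∈ Finset.range (i + 1), G i j
      = ∑' j : ℕ, if j ≤ i then G i j else 0 := by
    intro i
    rw [tsum_eq_sum (s := Finset.range (i + 1))]
    · exact Finset.sum_congr rfl fun j hj => by
        simp [Nat.lt_succ_iff.mp (Finset.mem_range.mp hj)]
    · intro j hj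
      simp only [Finset.mem_range, Nat.lt_succ_iff, not_le] at hj
      simp [Nat.not_le.mpr hj]
  simp_rw [h1]
  rw [ENNReal.tsum_comm]
  refine tsum_congr fun j => ?_
  have hinj : Function.Injective (fun k : ℕ => j + k) := fun x y h => by simpa using h
  rw [← Function.Injective.tsum_eq hinj (f := fun i => if j ≤ i then G i j else 0)]
  · exact tsum_congr fun k => by simp
  · intro i hi
    simp only [Function.mem_support, ne_eq, ite_eq_right_iff, not_forall] at hi
    obtain ⟨hji, -⟩ := hi
    exact ⟨i - j, by simp; omega⟩

/-- with `R* = Σ_i (1/(μ*_i b*_i)) Σ_{j=0}^i μ*_j` (a value in `[0,∞]`),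
one has `R* = Σ_j (H_j²/(μ_j b_j)) Σ_{i≥j} μ_{i+1}/(H_i H_{i+1})` and `R* ≤ μ²·S`, where
`S = Σ_k (1/(μ_k b_k)) Σ_{i>k} μ_i`.  In particular if `S < ∞` then `R* < ∞`. -/
theorem dual_R_formula_and_bound
    (a b : ℕ → ℝ) (ha : ∀ i, 1 ≤ i → 0 < a i) (hb : ∀ i, 0 < b i)
    (hmu : Summable (bdMu a b)) :
    (∑' i : ℕ, ENNReal.ofReal
        ((1 / (bdMuStar a b i * bdBStar a b i)) *
          ∑ j ∈ Finset.range (i + 1), bdMuStar a b j) =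
      ∑' j : ℕ, ENNReal.ofReal ((bdH a b j) ^ 2 / (bdMu a b j * b j)) *
        ∑' k : ℕ, ENNReal.ofReal
          (bdMu a b (j + k + 1) / (bdH a b (j + k) * bdH a b (j + k + 1)))) ∧
    (∑' i : ℕ, ENNReal.ofReal
        ((1 / (bdMuStar a b i * bdBStar a b i)) *
          ∑ j ∈ Finset.range (i + 1), bdMuStar a b j) ≤
      ENNReal.ofReal ((∑' i : ℕ, bdMu a b i) ^ 2) *
        ∑' k : ℕ, ENNReal.ofReal (1 / (bdMu a b k * b k)) *
          ∑' i : ℕ, ENNReal.ofReal (bdMu a b (k + 1 + i))) ∧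
    ((∑' k : ℕ, ENNReal.ofReal (1 / (bdMu a b k * b k)) *
        ∑' i : ℕ, ENNReal.ofReal (bdMu a b (k + 1 + i))) < ⊤ →
      (∑' i : ℕ, ENNReal.ofReal
        ((1 / (bdMuStar a b i * bdBStar a b i)) *
          ∑ j ∈ Finset.range (i + 1), bdMuStar a b j)) < ⊤) := by
  -- basic positivity
  have hmupos : ∀ i, 0 < bdMu a b i := bdMu_pos a b ha hb
  have hM1 : (1 : ℝ) ≤ ∑' j : ℕ, bdMu a b j := by
    have := Summable.le_tsum hmu 0 (fun j _ => (hmupos j).le)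
    rwa [bdMu_zero] at this
  have hMpos : (0 : ℝ) < ∑' j : ℕ, bdMu a b j := lt_of_lt_of_le one_pos hM1
  have hpi_pos : ∀ i, 0 < bdPi a b i := fun i => div_pos (hmupos i) hMpos
  have hH_pos : ∀ i, 0 < bdH a b i := fun i =>
    Finset.sum_pos (fun j _ => hpi_pos j) ⟨0, by simp⟩
  have hH_le_one : ∀ i, bdH a b i ≤ 1 := by
    intro i
    have hs : Summable (bdPi a b) := hmu.div_const _
    have hle := Summable.sum_le_tsum (Finset.range (i + 1)) (fun j _ => (hpi_pos j).le) hs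
    have ht : ∑' j : ℕ, bdPi a b j = 1 := by
      simp only [bdPi]
      rw [tsum_div_const]
      exact div_self hMpos.ne'
    rw [ht] at hle
    exact hle
  have hMH : ∀ i, 1 / (∑' j : ℕ, bdMu a b j) ≤ bdH a b i := by
    intro i
    have h0 : bdPi a b 0 = 1 / (∑' j : ℕ, bdMu a b j) := by
      simp [bdPi, bdMu_zero, one_div]
    calc 1 / (∑' j : ℕ, bdMu a b j) = bdPi a b 0 := h0.symm
      _ ≤ bdH a b i := Finset.single_le_sum (fun j _ => (hpi_pos j).le) (by simp)
  -- closed form for dual masses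
  have hstar : ∀ i, bdMuStar a b i =
      (bdH a b i) ^ 2 * b 0 / ((bdH a b 0) ^ 2 * bdMu a b i * b i) := by
    intro i
    induction i with
    | zero =>
      rw [show bdMuStar a b 0 = 1 from bdMu_zero _ _, bdMu_zero, mul_one,
        div_self (mul_pos (pow_pos (hH_pos 0) 2) (hb 0)).ne']
    | succ n ih =>
      have hrec : bdMuStar a b (n + 1) =
          bdMuStar a b n * bdBStar a b n / bdAStar a b (n + 1) := bdMu_succ _ _ n
      rw [hrec, ih]
      simp only [bdAStar, bdBStar, Nat.add_sub_cancel]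
      rw [bdMu_succ a b n]
      have h1 := (hH_pos 0).ne'
      have h2 := (hH_pos n).ne'
      have h3 := (hH_pos (n + 1)).ne'
      have h4 := (hmupos n).ne'
      have h5 := (hb n).ne'
      have h6 := (hb (n + 1)).ne'
      have h7 := (ha (n + 1) (by omega)).ne'
      field_simp
  have hstarb : ∀ i, bdMuStar a b i * bdBStar a b i =
      bdH a b i * bdH a b (i + 1) * b 0 / ((bdH a b 0) ^ 2 * bdMu a b (i + 1)) := by
    intro i
    rw [hstar i]
    simp only [bdBStar]
    rw [bdMu_succ a b i]
    have h1 := (hH_pos 0).ne'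
    have h2 := (hH_pos i).ne'
    have h3 := (hH_pos (i + 1)).ne'
    have h4 := (hmupos i).ne'
    have h5 := (hb i).ne'
    have h7 := (ha (i + 1) (by omega)).ne'
    field_simp
  -- key real identity
  have hA : ∀ i, (1 / (bdMuStar a b i * bdBStar a b i)) *
      ∑ j ∈ Finset.range (i + 1), bdMuStar a b j
      = ∑ j ∈ Finset.range (i + 1),
          (bdMu a b (i + 1) / (bdH a b i * bdH a b (i + 1))) *
            ((bdH a b j) ^ 2 / (bdMu a b j * b j)) := by
    intro i
    rw [hstarb i, Finset.mul_sum]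
    refine Finset.sum_congr rfl fun j _ => ?_
    rw [hstar j]
    have h1 := (hH_pos 0).ne'
    have h2 := (hH_pos i).ne'
    have h3 := (hH_pos (i + 1)).ne'
    have h4 := (hmupos j).ne'
    have h5 := (hb j).ne'
    have h6 := (hb 0).ne'
    have h8 := (hH_pos j).ne'
    field_simp
  have hc : ∀ i, (0:ℝ) ≤ bdMu a b (i + 1) / (bdH a b i * bdH a b (i + 1)) := fun i =>
    div_nonneg (hmupos _).le (mul_nonneg (hH_pos _).le (hH_pos _).le)
  have hd : ∀ j, (0:ℝ) ≤ (bdH a b j) ^ 2 / (bdMu a b j * b j) := fun j =>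
    div_nonneg (sq_nonneg _) (mul_nonneg (hmupos _).le (hb _).le)
  -- rewrite LHS as triangular double sum
  have hL : (∑' i : ℕ, ENNReal.ofReal
        ((1 / (bdMuStar a b i * bdBStar a b i)) *
          ∑ j ∈ Finset.range (i + 1), bdMuStar a b j))
      = ∑' i : ℕ, ∑ j ∈ Finset.range (i + 1),
          (ENNReal.ofReal (bdMu a b (i + 1) / (bdH a b i * bdH a b (i + 1))) *
            ENNReal.ofReal ((bdH a b j) ^ 2 / (bdMu a b j * b j))) := by
    refine tsum_congr fun i => ?_
    rw [hA i, ENNReal.ofReal_sum_of_nonneg (fun j _ => mul_nonneg (hc i) (hd j))]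
    exact Finset.sum_congr rfl fun j _ => ENNReal.ofReal_mul (hc i)
  have key : (∑' i : ℕ, ENNReal.ofReal
        ((1 / (bdMuStar a b i * bdBStar a b i)) *
          ∑ j ∈ Finset.range (i + 1), bdMuStar a b j))
      = ∑' j : ℕ, ENNReal.ofReal ((bdH a b j) ^ 2 / (bdMu a b j * b j)) *
          ∑' k : ℕ, ENNReal.ofReal
            (bdMu a b (j + k + 1) / (bdH a b (j + k) * bdH a b (j + k + 1))) := by
    rw [hL, tsum_range_swap]
    refine tsum_congr fun j => ?_
    rw [← ENNReal.tsum_mul_left]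
    exact tsum_congr fun k => mul_comm _ _
  have hbound : (∑' i : ℕ, ENNReal.ofReal
        ((1 / (bdMuStar a b i * bdBStar a b i)) *
          ∑ j ∈ Finset.range (i + 1), bdMuStar a b j)) ≤
      ENNReal.ofReal ((∑' i : ℕ, bdMu a b i) ^ 2) *
        ∑' k : ℕ, ENNReal.ofReal (1 / (bdMu a b k * b k)) *
          ∑' i : ℕ, ENNReal.ofReal (bdMu a b (k + 1 + i)) := by
    rw [key, ← ENNReal.tsum_mul_left]
    refine ENNReal.tsum_le_tsum fun j => ?_
    have h1 : ENNReal.ofReal ((bdH a b j) ^ 2 / (bdMu a b j * b j)) ≤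
        ENNReal.ofReal (1 / (bdMu a b j * b j)) := by
      apply ENNReal.ofReal_le_ofReal
      have hj1 := hmupos j
      have hj2 := hb j
      gcongr
      all_goals first
        | positivity
        | exact pow_le_one₀ (hH_pos j).le (hH_le_one j)
    have h2 : (∑' k : ℕ, ENNReal.ofReal
          (bdMu a b (j + k + 1) / (bdH a b (j + k) * bdH a b (j + k + 1)))) ≤
        ENNReal.ofReal ((∑' i : ℕ, bdMu a b i) ^ 2) *
          ∑' i : ℕ, ENNReal.ofReal (bdMu a b (j + 1 + i)) := by
      calc (∑' k : ℕ, ENNReal.ofReal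
            (bdMu a b (j + k + 1) / (bdH a b (j + k) * bdH a b (j + k + 1))))
          ≤ ∑' k : ℕ, ENNReal.ofReal
            ((∑' i : ℕ, bdMu a b i) ^ 2 * bdMu a b (j + k + 1)) := by
            refine ENNReal.tsum_le_tsum fun k => ENNReal.ofReal_le_ofReal ?_
            set M := ∑' i : ℕ, bdMu a b i with hMdef
            calc bdMu a b (j + k + 1) / (bdH a b (j + k) * bdH a b (j + k + 1))
                ≤ bdMu a b (j + k + 1) / ((1 / M) * (1 / M)) := by
                  have hM' : 0 < M := hMpos
                  have hh1 := hH_pos (j + k)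
                  have hh2 := hH_pos (j + k + 1)
                  gcongr
                  all_goals first
                    | positivity
                    | exact (hmupos _).le
                    | exact hMH _
              _ = M ^ 2 * bdMu a b (j + k + 1) := by
                  field_simp
        _ = ∑' k : ℕ, ENNReal.ofReal ((∑' i : ℕ, bdMu a b i) ^ 2) *
              ENNReal.ofReal (bdMu a b (j + k + 1)) :=
            tsum_congr fun k => ENNReal.ofReal_mul (by positivity)
        _ = ENNReal.ofReal ((∑' i : ℕ, bdMu a b i) ^ 2) *
              ∑' k : ℕ, ENNReal.ofReal (bdMu a b (j + k + 1)) := ENNReal.tsum_mul_left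
        _ = ENNReal.ofReal ((∑' i : ℕ, bdMu a b i) ^ 2) *
              ∑' i : ℕ, ENNReal.ofReal (bdMu a b (j + 1 + i)) := by
            congr 1
            exact tsum_congr fun k => by rw [show j + k + 1 = j + 1 + k from by omega]
    calc ENNReal.ofReal ((bdH a b j) ^ 2 / (bdMu a b j * b j)) *
          ∑' k : ℕ, ENNReal.ofReal
            (bdMu a b (j + k + 1) / (bdH a b (j + k) * bdH a b (j + k + 1)))
        ≤ ENNReal.ofReal (1 / (bdMu a b j * b j)) *
          (ENNReal.ofReal ((∑' i : ℕ, bdMu a b i) ^ 2) *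
            ∑' i : ℕ, ENNReal.ofReal (bdMu a b (j + 1 + i))) := mul_le_mul' h1 h2
      _ = ENNReal.ofReal ((∑' i : ℕ, bdMu a b i) ^ 2) *
          (ENNReal.ofReal (1 / (bdMu a b j * b j)) *
            ∑' i : ℕ, ENNReal.ofReal (bdMu a b (j + 1 + i))) := by ring
  exact ⟨key, hbound, fun hS =>
    lt_of_le_of_lt hbound (ENNReal.mul_lt_top ENNReal.ofReal_lt_top hS)⟩
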